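/- Under the stated IBCN assumptions (including f bounded below by f_min and ‖∇²f‖ bounded by H_max on the level set {x : f(x) ≤ f(x₀)}), the gradients of the iterates converge to zero: lim_{k→∞} ∇f(x_k) = 0. -/

import Mathlib

open scoped RealInnerProductSpace

noncomputable section

/-- `U_I`: extension by zero from block coordinates to full coordinates. -/
def blockIncl {n : ℕ} (I : Finset (Fin n)) :
    EuclideanSpace ℝ ↥I →ₗ[ℝ] EuclideanSpace ℝ (Fin n) where
  toFun s := WithLp.toLp 2 (fun i => if h : i ∈ I then s ⟨i, h⟩ else 0)
  map_add' s t := by ext i; by_cases h : i ∈ I <;> simp [h]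
  map_smul' c s := by ext i; by_cases h : i ∈ I <;> simp [h]

/-- `U_Iᵀ`: restriction of a vector to the block coordinates. -/
def blockRestr {n : ℕ} (I : Finset (Fin n)) :
    EuclideanSpace ℝ (Fin n) →ₗ[ℝ] EuclideanSpace ℝ ↥I where
  toFun x := WithLp.toLp 2 (fun i => x i)
  map_add' x y := by ext i; simp
  map_smul' c x := by ext i; simp

/-- Block Hessian `U_Iᵀ H U_I` as a continuous linear map. -/
def blockHess {n : ℕ} (I : Finset (Fin n))
    (H : EuclideanSpace ℝ (Fin n) →L[ℝ] EuclideanSpace ℝ (Fin n)) :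
    EuclideanSpace ℝ ↥I →L[ℝ] EuclideanSpace ℝ ↥I :=
  LinearMap.toContinuousLinearMap
    ((blockRestr I) ∘ₗ ((H : EuclideanSpace ℝ (Fin n) →ₗ[ℝ] EuclideanSpace ℝ (Fin n)) ∘ₗ blockIncl I))

/-- Quadratic model `q(s) = f₀ + gᵀs + (1/2) sᵀ H s`. -/
def quadModel {E : Type*} [NormedAddCommGroup E] [InnerProductSpace ℝ E]
    (f₀ : ℝ) (g : E) (H : E →L[ℝ] E) (s : E) : ℝ :=
  f₀ + ⟪g, s⟫ + (1 / 2) * ⟪s, H s⟫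

/-- Cubic model `m(s) = q(s) + (σ/6) ‖s‖³`. -/
def cubicModel {E : Type*} [NormedAddCommGroup E] [InnerProductSpace ℝ E]
    (f₀ : ℝ) (g : E) (H : E →L[ℝ] E) (σ : ℝ) (s : E) : ℝ :=
  quadModel f₀ g H s + σ / 6 * ‖s‖ ^ 3

/-- Gradient of the cubic model: `∇m(s) = g + H s + (σ/2) ‖s‖ s`. -/
def cubicModelGrad {E : Type*} [NormedAddCommGroup E] [InnerProductSpace ℝ E]
    (g : E) (H : E →L[ℝ] E) (σ : ℝ) (s : E) : E :=
  g + H s + (σ / 2 * ‖s‖) • s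

/-- The stepsize `α̂ = min{β/‖H‖, √(3β/(σ‖g‖))}`, the first argument being `+∞` if `H = 0`. -/
def alphaHat {E : Type*} [NormedAddCommGroup E] [InnerProductSpace ℝ E]
    (β σ : ℝ) (g : E) (H : E →L[ℝ] E) : ℝ :=
  haveI := Classical.dec (H = 0)
  if H = 0 then Real.sqrt (3 * β / (σ * ‖g‖))
  else min (β / ‖H‖) (Real.sqrt (3 * β / (σ * ‖g‖)))

/-- The Cauchy-like point `ŝ = -α̂ g`. -/
def sHat {E : Type*} [NormedAddCommGroup E] [InnerProductSpace ℝ E]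
    (β σ : ℝ) (g : E) (H : E →L[ℝ] E) : E :=
  -(alphaHat β σ g H) • g


section BlockLemmas
variable {n : ℕ} (I : Finset (Fin n))

lemma blockRestr_incl (s : EuclideanSpace ℝ ↥I) : blockRestr I (blockIncl I s) = s := by
  ext i
  simp [blockRestr, blockIncl]

lemma inner_blockIncl (s : EuclideanSpace ℝ ↥I) (v : EuclideanSpace ℝ (Fin n)) :
    ⟪blockIncl I s, v⟫ = ⟪s, blockRestr I v⟫ := by
  classical
  simp only [PiLp.inner_apply, RCLike.inner_apply, conj_trivial]
  have h1 : ∀ i : Fin n, v i * (blockIncl I) s i = dite (i ∈ I) (fun h => v i * s ⟨i, h⟩) (fun _ => 0) := by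
    intro i; by_cases h : i ∈ I <;> simp [blockIncl, h]
  rw [Finset.sum_congr rfl (fun i _ => h1 i)]
  rw [← Finset.sum_subset (Finset.subset_univ I) (by intro i _ hi; simp [hi])]
  rw [← Finset.sum_attach I (fun i => dite (i ∈ I) (fun h => v i * s ⟨i, h⟩) (fun _ => 0))]
  rw [Finset.univ_eq_attach]
  exact Finset.sum_congr rfl (fun j _ => by simp [blockRestr, j.2])

lemma norm_blockIncl (s : EuclideanSpace ℝ ↥I) : ‖blockIncl I s‖ = ‖s‖ := by
  have h : ⟪blockIncl I s, blockIncl I s⟫ = ⟪s, s⟫ := by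
    rw [inner_blockIncl, blockRestr_incl]
  rw [real_inner_self_eq_norm_sq, real_inner_self_eq_norm_sq] at h
  have := congrArg Real.sqrt h
  simpa [Real.sqrt_sq, norm_nonneg] using this

lemma norm_blockRestr_le (v : EuclideanSpace ℝ (Fin n)) : ‖blockRestr I v‖ ≤ ‖v‖ := by
  by_cases h : blockRestr I v = 0
  · simp [h]
  · have h1 : ‖blockRestr I v‖ ^ 2 = ⟪blockIncl I (blockRestr I v), v⟫ := by
      rw [inner_blockIncl, real_inner_self_eq_norm_sq]
    have h2 := real_inner_le_norm (blockIncl I (blockRestr I v)) v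
    rw [norm_blockIncl] at h2
    have hpos : 0 < ‖blockRestr I v‖ := norm_pos_iff.2 h
    nlinarith [h1, h2]

lemma blockHess_apply (H : EuclideanSpace ℝ (Fin n) →L[ℝ] EuclideanSpace ℝ (Fin n))
    (t : EuclideanSpace ℝ ↥I) : blockHess I H t = blockRestr I (H (blockIncl I t)) := rfl

lemma inner_blockHess (H : EuclideanSpace ℝ (Fin n) →L[ℝ] EuclideanSpace ℝ (Fin n))
    (t : EuclideanSpace ℝ ↥I) :
    ⟪t, blockHess I H t⟫ = ⟪blockIncl I t, H (blockIncl I t)⟫ := by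
  rw [blockHess_apply, ← inner_blockIncl]

lemma norm_blockHess_le (H : EuclideanSpace ℝ (Fin n) →L[ℝ] EuclideanSpace ℝ (Fin n)) :
    ‖blockHess I H‖ ≤ ‖H‖ := by
  refine ContinuousLinearMap.opNorm_le_bound _ (norm_nonneg H) (fun t => ?_)
  rw [blockHess_apply]
  calc ‖blockRestr I (H (blockIncl I t))‖ ≤ ‖H (blockIncl I t)‖ := norm_blockRestr_le _ _
    _ ≤ ‖H‖ * ‖blockIncl I t‖ := H.le_opNorm _
    _ = ‖H‖ * ‖t‖ := by rw [norm_blockIncl]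

end BlockLemmas



variable {n : ℕ}
local notation "E" => EuclideanSpace ℝ (Fin n)

lemma hess_cont (hessf : E → (E →L[ℝ] E)) (L : ℝ) (hL : 0 ≤ L)
    (hlip : ∀ x y, ‖hessf x - hessf y‖ ≤ L * ‖x - y‖) : Continuous hessf := by
  have : LipschitzWith L.toNNReal hessf := by
    rw [lipschitzWith_iff_dist_le_mul]
    intro a b
    rw [dist_eq_norm, dist_eq_norm, Real.coe_toNNReal L hL]
    exact hlip a b
  exact this.continuous

lemma grad_taylor (gradf : E → E) (hessf : E → (E →L[ℝ] E))
    (hhessf : ∀ x, HasFDerivAt gradf (hessf x) x) (L : ℝ) (hL : 0 ≤ L)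
    (hlip : ∀ x y, ‖hessf x - hessf y‖ ≤ L * ‖x - y‖) (y h : E) :
    ‖gradf (y + h) - gradf y - hessf y h‖ ≤ L / 2 * ‖h‖ ^ 2 := by
  set γ : ℝ → E := fun t => gradf (y + t • h) - t • (hessf y h) with hγ
  have hline : ∀ t : ℝ, HasDerivAt (fun u : ℝ => y + u • h) h t := fun t =>
    by simpa using (((hasDerivAt_id t).smul_const h).const_add y)
  have hd : ∀ t : ℝ, HasDerivAt γ (hessf (y + t • h) h - hessf y h) t := by
    intro t
    have h2 : HasDerivAt (fun u : ℝ => u • (hessf y h)) (hessf y h) t := by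
      simpa using (hasDerivAt_id t).smul_const (hessf y h)
    exact ((hhessf (y + t • h)).comp_hasDerivAt t (hline t)).sub h2
  have hcont : Continuous fun t : ℝ => hessf (y + t • h) h - hessf y h := by
    have h1 : Continuous fun t : ℝ => hessf (y + t • h) :=
      (hess_cont hessf L hL hlip).comp (continuous_const.add (continuous_id.smul continuous_const))
    exact (h1.clm_apply continuous_const).sub continuous_const
  have hint : IntervalIntegrable (fun t : ℝ => hessf (y + t • h) h - hessf y h)
      MeasureTheory.volume 0 1 := hcont.intervalIntegrable 0 1
  have heq : γ 1 - γ 0 = ∫ t in (0:ℝ)..1, (hessf (y + t • h) h - hessf y h) :=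
    (intervalIntegral.integral_eq_sub_of_hasDerivAt (fun t _ => hd t) hint).symm
  have hval : γ 1 - γ 0 = gradf (y + h) - gradf y - hessf y h := by
    simp [hγ]; abel
  rw [← hval, heq]
  have hb : ∀ t ∈ Set.uIoc (0:ℝ) 1, ‖hessf (y + t • h) h - hessf y h‖ ≤ L * t * ‖h‖ ^ 2 := by
    intro t ht
    rw [Set.uIoc_of_le (by norm_num : (0:ℝ) ≤ 1)] at ht
    calc ‖hessf (y + t • h) h - hessf y h‖ = ‖(hessf (y + t • h) - hessf y) h‖ := by
          simp [ContinuousLinearMap.sub_apply]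
      _ ≤ ‖hessf (y + t • h) - hessf y‖ * ‖h‖ := ContinuousLinearMap.le_opNorm _ _
      _ ≤ (L * ‖t • h‖) * ‖h‖ := by
          have := hlip (y + t • h) y
          simp only [add_sub_cancel_left] at this
          exact mul_le_mul_of_nonneg_right this (norm_nonneg h)
      _ = L * t * ‖h‖ ^ 2 := by
          rw [norm_smul, Real.norm_eq_abs, abs_of_pos ht.1]; ring
  calc ‖∫ t in (0:ℝ)..1, (hessf (y + t • h) h - hessf y h)‖
      ≤ |∫ t in (0:ℝ)..1, L * t * ‖h‖ ^ 2| := by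
        apply intervalIntegral.norm_integral_le_abs_of_norm_le
        · exact (MeasureTheory.ae_restrict_iff' measurableSet_uIoc).2 (.of_forall hb)
        · exact ((continuous_const.mul continuous_id).mul continuous_const : Continuous fun t : ℝ => L * t * ‖h‖ ^ 2).intervalIntegrable 0 1
    _ = L / 2 * ‖h‖ ^ 2 := by
        have : ∫ t in (0:ℝ)..1, L * t * ‖h‖ ^ 2 = L / 2 * ‖h‖ ^ 2 := by
          have h1 : (fun t : ℝ => L * t * ‖h‖ ^ 2) = fun t : ℝ => (L * ‖h‖ ^ 2) * t := by
            funext t; ring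
          rw [h1, intervalIntegral.integral_const_mul, integral_id]
          ring
        rw [this, abs_of_nonneg (by positivity)]

lemma f_taylor (f : E → ℝ) (gradf : E → E) (hessf : E → (E →L[ℝ] E))
    (hgradf : ∀ x, HasGradientAt f (gradf x) x)
    (hhessf : ∀ x, HasFDerivAt gradf (hessf x) x) (L : ℝ) (hL : 0 ≤ L)
    (hlip : ∀ x y, ‖hessf x - hessf y‖ ≤ L * ‖x - y‖) (y h : E) :
    f (y + h) ≤ f y + ⟪gradf y, h⟫ + 1 / 2 * ⟪h, hessf y h⟫ + L / 6 * ‖h‖ ^ 3 := by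
  have hgc : Continuous gradf :=
    continuous_iff_continuousAt.2 fun x => (hhessf x).differentiableAt.continuousAt
  set c₁ : ℝ := ⟪gradf y, h⟫ with hc₁
  set c₂ : ℝ := ⟪h, hessf y h⟫ with hc₂
  set ψ : ℝ → ℝ := fun t => f (y + t • h) - t * c₁ - t ^ 2 / 2 * c₂ with hψ
  set ψ' : ℝ → ℝ := fun t => ⟪gradf (y + t • h), h⟫ - c₁ - t * c₂ with hψ'
  have hline : ∀ t : ℝ, HasDerivAt (fun u : ℝ => y + u • h) h t := fun t =>
    by simpa using (((hasDerivAt_id t).smul_const h).const_add y)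
  have hd : ∀ t : ℝ, HasDerivAt ψ (ψ' t) t := by
    intro t
    have h1 : HasDerivAt (fun u : ℝ => f (y + u • h)) ⟪gradf (y + t • h), h⟫ t := by
      have := ((hgradf (y + t • h)).hasFDerivAt).comp_hasDerivAt t (hline t)
      simp at this; exact this
    have h2 : HasDerivAt (fun u : ℝ => u * c₁) c₁ t := hasDerivAt_mul_const c₁
    have h3 : HasDerivAt (fun u : ℝ => u ^ 2 / 2 * c₂) (t * c₂) t := by
      have := ((hasDerivAt_pow 2 t).div_const 2).mul_const c₂
      norm_num at this
      convert this using 1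
      try ring
    exact (h1.sub h2).sub h3
  have hψ'c : Continuous ψ' := by
    refine (Continuous.sub (Continuous.sub ?_ continuous_const) ?_)
    · exact Continuous.inner (hgc.comp (continuous_const.add (continuous_id.smul continuous_const)))
        continuous_const
    · exact continuous_id.mul continuous_const
  have heq : ψ 1 - ψ 0 = ∫ t in (0:ℝ)..1, ψ' t :=
    (intervalIntegral.integral_eq_sub_of_hasDerivAt (fun t _ => hd t)
      (hψ'c.intervalIntegrable 0 1)).symm
  have hbound : ∀ t ∈ Set.Icc (0:ℝ) 1, ψ' t ≤ L / 2 * t ^ 2 * ‖h‖ ^ 3 := by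
    intro t _
    have hkey := grad_taylor gradf hessf hhessf L hL hlip y (t • h)
    have hrw : ψ' t = ⟪gradf (y + t • h) - gradf y - hessf y (t • h), h⟫ := by
      rw [inner_sub_left, inner_sub_left, (hessf y).map_smul, real_inner_smul_left]
      simp only [hψ', hc₁, hc₂, RCLike.ofReal_real_eq_id, id]
      rw [real_inner_comm h (hessf y h)]
      try ring
    rw [hrw]
    calc ⟪gradf (y + t • h) - gradf y - hessf y (t • h), h⟫
        ≤ ‖gradf (y + t • h) - gradf y - hessf y (t • h)‖ * ‖h‖ := real_inner_le_norm _ _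
      _ ≤ (L / 2 * ‖t • h‖ ^ 2) * ‖h‖ :=
          mul_le_mul_of_nonneg_right hkey (norm_nonneg h)
      _ = L / 2 * t ^ 2 * ‖h‖ ^ 3 := by
          rw [norm_smul, Real.norm_eq_abs, mul_pow, sq_abs]; ring
  have hmono : (∫ t in (0:ℝ)..1, ψ' t) ≤ ∫ t in (0:ℝ)..1, L / 2 * t ^ 2 * ‖h‖ ^ 3 := by
    apply intervalIntegral.integral_mono_on (by norm_num)
      (hψ'c.intervalIntegrable 0 1)
      (((continuous_const.mul (continuous_pow 2)).mul continuous_const).intervalIntegrable 0 1)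
      hbound
  have hval : ∫ t in (0:ℝ)..1, L / 2 * t ^ 2 * ‖h‖ ^ 3 = L / 6 * ‖h‖ ^ 3 := by
    have h1 : (fun t : ℝ => L / 2 * t ^ 2 * ‖h‖ ^ 3) = fun t : ℝ => (L / 2 * ‖h‖ ^ 3) * t ^ 2 := by
      funext t; ring
    rw [h1, intervalIntegral.integral_const_mul, integral_pow]
    norm_num; ring
  have hfinal : ψ 1 - ψ 0 ≤ L / 6 * ‖h‖ ^ 3 := by rw [heq, ← hval]; exact hmono
  simp only [hψ, one_smul, one_pow, zero_smul, zero_pow, add_zero, zero_mul, sub_zero,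
    ne_eq, OfNat.ofNat_ne_zero, not_false_eq_true, zero_div] at hfinal
  -- hfinal : f (y + h) - c₁ - 1/2 * c₂ - f y ≤ L/6‖h‖³  (roughly)
  nlinarith [hfinal]

section Cauchy
variable {F : Type*} [NormedAddCommGroup F] [InnerProductSpace ℝ F]

lemma alphaHat_pos (β σ : ℝ) (g : F) (H : F →L[ℝ] F) (hβ0 : 0 < β) (hσ : 0 < σ) (hg : g ≠ 0) :
    0 < alphaHat β σ g H := by
  have hgn : 0 < ‖g‖ := norm_pos_iff.2 hg
  have hr : 0 < Real.sqrt (3 * β / (σ * ‖g‖)) := Real.sqrt_pos.2 (by positivity)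
  unfold alphaHat
  split
  · exact hr
  · next hH => exact lt_min (div_pos hβ0 (norm_pos_iff.2 hH)) hr

lemma alphaHat_le_sqrt (β σ : ℝ) (g : F) (H : F →L[ℝ] F) :
    alphaHat β σ g H ≤ Real.sqrt (3 * β / (σ * ‖g‖)) := by
  unfold alphaHat; split
  · exact le_refl _
  · exact min_le_right _ _

lemma alphaHat_mul_norm_le (β σ : ℝ) (g : F) (H : F →L[ℝ] F) (hβ0 : 0 < β) :
    alphaHat β σ g H * ‖H‖ ≤ β := by
  unfold alphaHat; split
  · next h => simp [h, hβ0.le]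
  · next h =>
    have hH : 0 < ‖H‖ := norm_pos_iff.2 h
    calc min (β / ‖H‖) (Real.sqrt (3 * β / (σ * ‖g‖))) * ‖H‖ ≤ (β / ‖H‖) * ‖H‖ :=
          mul_le_mul_of_nonneg_right (min_le_left _ _) hH.le
      _ = β := by field_simp

lemma cauchy_decrease (f₀ β σ : ℝ) (g : F) (H : F →L[ℝ] F)
    (hβ0 : 0 < β) (hσ : 0 < σ) (hg : g ≠ 0) :
    cubicModel f₀ g H σ (sHat β σ g H) ≤ f₀ - alphaHat β σ g H * (1 - β) * ‖g‖ ^ 2 := by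
  set α := alphaHat β σ g H with hα
  have hαpos : 0 < α := alphaHat_pos β σ g H hβ0 hσ hg
  have hgn : 0 < ‖g‖ := norm_pos_iff.2 hg
  have hA2 : α * ‖H‖ ≤ β := alphaHat_mul_norm_le β σ g H hβ0
  have hA3 : σ * α ^ 2 * ‖g‖ ≤ 3 * β := by
    have h1 : α ≤ Real.sqrt (3 * β / (σ * ‖g‖)) := alphaHat_le_sqrt β σ g H
    have h2 : α ^ 2 ≤ 3 * β / (σ * ‖g‖) := by
      have := Real.sq_sqrt (by positivity : (0:ℝ) ≤ 3 * β / (σ * ‖g‖))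
      nlinarith [h1, hαpos.le, Real.sqrt_nonneg (3 * β / (σ * ‖g‖))]
    have h3 : 0 < σ * ‖g‖ := by positivity
    calc σ * α ^ 2 * ‖g‖ = (σ * ‖g‖) * α ^ 2 := by ring
      _ ≤ (σ * ‖g‖) * (3 * β / (σ * ‖g‖)) := mul_le_mul_of_nonneg_left h2 h3.le
      _ = 3 * β := by field_simp
  have hCS : ⟪g, H g⟫ ≤ ‖H‖ * ‖g‖ ^ 2 := by
    calc ⟪g, H g⟫ ≤ ‖g‖ * ‖H g‖ := real_inner_le_norm _ _
      _ ≤ ‖g‖ * (‖H‖ * ‖g‖) := mul_le_mul_of_nonneg_left (H.le_opNorm g) hgn.le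
      _ = ‖H‖ * ‖g‖ ^ 2 := by ring
  have hm : cubicModel f₀ g H σ (sHat β σ g H) =
      f₀ - α * ‖g‖ ^ 2 + α ^ 2 / 2 * ⟪g, H g⟫ + σ / 6 * α ^ 3 * ‖g‖ ^ 3 := by
    unfold cubicModel quadModel sHat
    rw [← hα]
    have e1 : ⟪g, -α • g⟫ = -α * ‖g‖ ^ 2 := by
      rw [real_inner_smul_right, real_inner_self_eq_norm_sq]
    have e2 : ⟪-α • g, H (-α • g)⟫ = α ^ 2 * ⟪g, H g⟫ := by
      rw [map_smul, real_inner_smul_left, real_inner_smul_right]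
      try ring_nf
      try simp [smul_eq_mul]
      try ring
    have e3 : ‖-α • g‖ = α * ‖g‖ := by
      rw [norm_smul, norm_neg, Real.norm_eq_abs, abs_of_pos hαpos]
    rw [e1, e2, e3]
    ring
  rw [hm]
  nlinarith [mul_le_mul_of_nonneg_right hCS (mul_nonneg (sq_nonneg α) (by norm_num : (0:ℝ) ≤ 1/2)),
    mul_le_mul_of_nonneg_right hA2 (mul_nonneg hαpos.le (sq_nonneg ‖g‖)),
    mul_le_mul_of_nonneg_right hA3 (mul_nonneg (mul_nonneg hαpos.le hgn.le) (mul_nonneg hgn.le hgn.le)),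
    sq_nonneg ‖g‖, hαpos.le, hgn.le]

end Cauchy


section MoreAux
variable {F : Type*} [NormedAddCommGroup F] [InnerProductSpace ℝ F]

lemma alphaHat_lb (β σ S Hmax : ℝ) (g : F) (H : F →L[ℝ] F) (hβ0 : 0 < β) (hσ : 0 < σ)
    (hσS : σ ≤ S) (hgn : 0 < ‖g‖) (hBH : ‖H‖ ≤ Hmax) (hHmax : 0 < Hmax) :
    min (β / Hmax) (Real.sqrt (3 * β / (S * ‖g‖))) ≤ alphaHat β σ g H := by
  have hS : 0 < S := lt_of_lt_of_le hσ hσS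
  have hsq : Real.sqrt (3 * β / (S * ‖g‖)) ≤ Real.sqrt (3 * β / (σ * ‖g‖)) := by
    apply Real.sqrt_le_sqrt
    exact div_le_div_of_nonneg_left (mul_nonneg (by norm_num) hβ0.le) (mul_pos hσ hgn)
      (mul_le_mul_of_nonneg_right hσS hgn.le)
  unfold alphaHat
  split
  · exact le_trans (min_le_right _ _) hsq
  · next hH =>
    have hHpos : 0 < ‖H‖ := norm_pos_iff.2 hH
    exact min_le_min (div_le_div_of_nonneg_left hβ0.le hHpos hBH) hsq

lemma sqrt_mul_sq (β S t : ℝ) (hβ : 0 < β) (hS : 0 < S) (ht : 0 < t) :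
    Real.sqrt (3 * β / (S * t)) * t ^ 2 = Real.sqrt (3 * β * t ^ 3 / S) := by
  rw [show 3 * β * t ^ 3 / S = (3 * β / (S * t)) * (t ^ 2) ^ 2 by field_simp]
  rw [Real.sqrt_mul (by positivity), Real.sqrt_sq (sq_nonneg t)]

end MoreAux
set_option maxHeartbeats 1000000 in
theorem stmt14 (n : ℕ) (hn : 0 < n)
    (f : EuclideanSpace ℝ (Fin n) → ℝ)
    (gradf : EuclideanSpace ℝ (Fin n) → EuclideanSpace ℝ (Fin n))
    (hessf : EuclideanSpace ℝ (Fin n) → (EuclideanSpace ℝ (Fin n) →L[ℝ] EuclideanSpace ℝ (Fin n)))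
    (hf : ContDiff ℝ 2 f)
    (hgradf : ∀ x, HasGradientAt f (gradf x) x)
    (hhessf : ∀ x, HasFDerivAt gradf (hessf x) x)
    (L : ℝ) (hL : 0 < L)
    (hlipL : ∀ x y, ‖hessf x - hessf y‖ ≤ L * ‖x - y‖)
    (σmin σ₀ η₁ η₂ γ₁ γ₂ γ₃ τ β θ : ℝ)
    (hσmin : 0 < σmin) (hσ₀ : σmin ≤ σ₀)
    (hη₁0 : 0 < η₁) (hη₁₂ : η₁ ≤ η₂) (hη₂1 : η₂ < 1)
    (hγ₁0 : 0 < γ₁) (hγ₁1 : γ₁ ≤ 1) (hγ₂ : 1 < γ₂) (hγ₂₃ : γ₂ ≤ γ₃)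
    (hτ : 0 ≤ τ) (hβ0 : 0 < β) (hβ1 : β < 1) (hθ0 : 0 < θ) (hθ1 : θ ≤ 1)
    (x : ℕ → EuclideanSpace ℝ (Fin n)) (I : ℕ → Finset (Fin n))
    (s : ∀ k : ℕ, EuclideanSpace ℝ ↥(I k)) (σ : ℕ → ℝ) (ρ : ℕ → ℝ)
    (hσzero : σ 0 = σ₀) (hσpos : ∀ k, 0 < σ k)
    (hgne : ∀ k, gradf (x k) ≠ 0)
    (hgreedy : ∀ k, θ * ‖gradf (x k)‖ ≤ ‖blockRestr (I k) (gradf (x k))‖)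
    (hstepg : ∀ k, ‖cubicModelGrad (blockRestr (I k) (gradf (x k)))
        (blockHess (I k) (hessf (x k))) (σ k) (s k)‖ ≤ τ * ‖s k‖ ^ 2)
    (hstepm : ∀ k, cubicModel (f (x k)) (blockRestr (I k) (gradf (x k)))
        (blockHess (I k) (hessf (x k))) (σ k) (s k) ≤
      cubicModel (f (x k)) (blockRestr (I k) (gradf (x k)))
        (blockHess (I k) (hessf (x k))) (σ k)
        (sHat β (σ k) (blockRestr (I k) (gradf (x k))) (blockHess (I k) (hessf (x k)))))
    (hρ : ∀ k, ρ k = (f (x k) - f (x k + blockIncl (I k) (s k))) /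
      (quadModel (f (x k)) (blockRestr (I k) (gradf (x k))) (blockHess (I k) (hessf (x k))) 0 -
       quadModel (f (x k)) (blockRestr (I k) (gradf (x k))) (blockHess (I k) (hessf (x k))) (s k)))
    (hx : ∀ k, x (k + 1) = if η₁ ≤ ρ k then x k + blockIncl (I k) (s k) else x k)
    (hσ1 : ∀ k, η₂ ≤ ρ k → max σmin (γ₁ * σ k) ≤ σ (k + 1) ∧ σ (k + 1) ≤ σ k)
    (hσ2 : ∀ k, η₁ ≤ ρ k → ρ k < η₂ → σ k ≤ σ (k + 1) ∧ σ (k + 1) ≤ γ₂ * σ k)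
    (hσ3 : ∀ k, ρ k < η₁ → γ₂ * σ k ≤ σ (k + 1) ∧ σ (k + 1) ≤ γ₃ * σ k)
    (fmin Hmax : ℝ) (hHmax : 0 < Hmax)
    (hfmin : ∀ y, f y ≤ f (x 0) → fmin ≤ f y)
    (hHb : ∀ y, f y ≤ f (x 0) → ‖hessf y‖ ≤ Hmax) :
    Filter.Tendsto (fun k => gradf (x k)) Filter.atTop (nhds 0) := by

  classical
  set g : ∀ k : ℕ, EuclideanSpace ℝ ↥(I k) := fun k => blockRestr (I k) (gradf (x k)) with hgdef
  set B : ∀ k : ℕ, EuclideanSpace ℝ ↥(I k) →L[ℝ] EuclideanSpace ℝ ↥(I k) := fun k => blockHess (I k) (hessf (x k)) with hBdef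
  set α : ℕ → ℝ := fun k => alphaHat β (σ k) (g k) (B k) with hαdef
  set D : ℕ → ℝ := fun k => quadModel (f (x k)) (g k) (B k) 0 -
      quadModel (f (x k)) (g k) (B k) (s k) with hDdef
  have hL0 : (0:ℝ) ≤ L := hL.le
  have hgn : ∀ k, 0 < ‖g k‖ := by
    intro k
    have h1 : 0 < ‖gradf (x k)‖ := norm_pos_iff.2 (hgne k)
    calc (0:ℝ) < θ * ‖gradf (x k)‖ := by positivity
      _ ≤ ‖g k‖ := hgreedy k
  have hgne' : ∀ k, g k ≠ 0 := fun k => norm_pos_iff.1 (hgn k)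
  have hαpos : ∀ k, 0 < α k := fun k => alphaHat_pos β (σ k) (g k) (B k) hβ0 (hσpos k) (hgne' k)
  have hsk0 : ∀ k, s k ≠ 0 := by
    intro k hs
    have h1 := hstepg k
    rw [hs] at h1
    simp only [cubicModelGrad, norm_zero, map_zero, smul_zero, add_zero, mul_zero,
      ne_eq, OfNat.ofNat_ne_zero, not_false_eq_true, zero_pow] at h1
    exact absurd (le_antisymm h1 (norm_nonneg _)) (by simpa using (hgne' k))
  have hcd : ∀ k, cubicModel (f (x k)) (g k) (B k) (σ k) (s k) ≤
      f (x k) - α k * (1 - β) * ‖g k‖ ^ 2 := fun k =>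
    le_trans (hstepm k) (cauchy_decrease (f (x k)) β (σ k) (g k) (B k) hβ0 (hσpos k) (hgne' k))
  have hq0 : ∀ k, quadModel (f (x k)) (g k) (B k) 0 = f (x k) := by
    intro k
    simp [quadModel]
  have hDlb : ∀ k, α k * (1 - β) * ‖g k‖ ^ 2 + σ k / 6 * ‖s k‖ ^ 3 ≤ D k := by
    intro k
    have h1 := hcd k
    simp only [cubicModel] at h1
    rw [hDdef]
    simp only [hq0 k]
    linarith [h1]
  have hApos : ∀ k, 0 < α k * (1 - β) * ‖g k‖ ^ 2 := fun k =>
    mul_pos (mul_pos (hαpos k) (sub_pos.2 hβ1)) (pow_pos (hgn k) 2)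
  have hsn3 : ∀ k, 0 < σ k / 6 * ‖s k‖ ^ 3 := fun k =>
    mul_pos (div_pos (hσpos k) (by norm_num)) (pow_pos (norm_pos_iff.2 (hsk0 k)) 3)
  have hDpos : ∀ k, 0 < D k := fun k =>
    lt_of_lt_of_le (add_pos (hApos k) (hsn3 k)) (hDlb k)
  have hρ' : ∀ k, ρ k = (f (x k) - f (x k + blockIncl (I k) (s k))) / D k := fun k => hρ k
  have hnum : ∀ k, f (x k) - f (x k + blockIncl (I k) (s k)) = ρ k * D k := by
    intro k
    rw [hρ' k]
    field_simp [(hDpos k).ne']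
  have hdec : ∀ k, η₁ ≤ ρ k → η₁ * D k ≤ f (x k) - f (x (k + 1)) := by
    intro k hk
    rw [hx k, if_pos hk, hnum k]
    exact mul_le_mul_of_nonneg_right hk (hDpos k).le
  have hmono : ∀ k, f (x (k + 1)) ≤ f (x k) := by
    intro k
    by_cases hk : η₁ ≤ ρ k
    · have := hdec k hk
      nlinarith [mul_pos hη₁0 (hDpos k)]
    · rw [hx k, if_neg hk]
  have hlev : ∀ k, f (x k) ≤ f (x 0) := by
    intro k
    induction k with
    | zero => exact le_refl _
    | succ m ih => exact le_trans (hmono m) ih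
  have hBb : ∀ k, ‖B k‖ ≤ Hmax :=
    fun k => le_trans (norm_blockHess_le _ _) (hHb (x k) (hlev k))
  -- Taylor bound on the trial point
  have htay : ∀ k, f (x k + blockIncl (I k) (s k)) ≤
      quadModel (f (x k)) (g k) (B k) (s k) + L / 6 * ‖s k‖ ^ 3 := by
    intro k
    have h1 := f_taylor f gradf hessf hgradf hhessf L hL0 hlipL (x k) (blockIncl (I k) (s k))
    have e1 : ⟪gradf (x k), blockIncl (I k) (s k)⟫ = ⟪g k, s k⟫ := by
      rw [real_inner_comm, inner_blockIncl, real_inner_comm]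
    have e2 : ⟪blockIncl (I k) (s k), hessf (x k) (blockIncl (I k) (s k))⟫ = ⟪s k, B k ( s k)⟫ :=
      (inner_blockHess (I k) (hessf (x k)) (s k)).symm
    have e3 : ‖blockIncl (I k) (s k)‖ = ‖s k‖ := norm_blockIncl _ _
    rw [e1, e2, e3] at h1
    simpa [quadModel] using h1
  have hgr : ∀ k, θ * ‖gradf (x k)‖ ≤ ‖g k‖ := hgreedy
  have hαlb' : ∀ k, ∀ S : ℝ, σ k ≤ S → 0 < S →
      min (β / Hmax) (Real.sqrt (3 * β / (S * ‖g k‖))) ≤ α k := fun k S hS hS0 =>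
    alphaHat_lb β (σ k) S Hmax (g k) (B k) hβ0 (hσpos k) hS (hgn k) (hBb k) hHmax
  clear_value D α B g
  -- success when σ is large
  have hsucc_big : ∀ k, L / (1 - η₂) ≤ σ k → η₂ ≤ ρ k := by
    intro k hk
    have h1η : 0 < 1 - η₂ := by linarith
    have hLσ : L ≤ (1 - η₂) * σ k := by
      rw [div_le_iff₀ h1η] at hk
      linarith
    have hsn : 0 < ‖s k‖ ^ 3 := pow_pos (norm_pos_iff.2 (hsk0 k)) 3
    have h2 : f (x k) - f (x k + blockIncl (I k) (s k)) ≥ D k - L / 6 * ‖s k‖ ^ 3 := by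
      have := htay k
      rw [hDdef]
      simp only [hq0 k]
      linarith
    have h3 : L / 6 * ‖s k‖ ^ 3 ≤ (1 - η₂) * (σ k / 6 * ‖s k‖ ^ 3) := by
      rw [show (1 - η₂) * (σ k / 6 * ‖s k‖ ^ 3) = ((1 - η₂) * σ k) / 6 * ‖s k‖ ^ 3 by ring]
      have : L / 6 ≤ ((1 - η₂) * σ k) / 6 := by linarith
      exact mul_le_mul_of_nonneg_right this hsn.le
    have h4 : σ k / 6 * ‖s k‖ ^ 3 ≤ D k :=
      le_trans (le_add_of_nonneg_left (hApos k).le) (hDlb k)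
    have h5 : η₂ * D k ≤ f (x k) - f (x k + blockIncl (I k) (s k)) := by
      have h6 : (1 - η₂) * (σ k / 6 * ‖s k‖ ^ 3) ≤ (1 - η₂) * D k :=
        mul_le_mul_of_nonneg_left h4 h1η.le
      nlinarith [h2, h3, h6]
    rw [hρ' k, le_div_iff₀ (hDpos k)]
    linarith [h5, hnum k]

  -- σ is bounded above
  set σmax : ℝ := max σ₀ (γ₃ * (L / (1 - η₂))) with hσmaxdef
  have h1η : (0:ℝ) < 1 - η₂ := by linarith
  have hσub : ∀ k, σ k ≤ σmax := by
    intro k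
    induction k with
    | zero => rw [hσzero]; exact le_max_left _ _
    | succ m ih =>
      by_cases hc : L / (1 - η₂) ≤ σ m
      · exact le_trans (hσ1 m (hsucc_big m hc)).2 ih
      · push_neg at hc
        have hup : σ (m + 1) ≤ γ₃ * σ m := by
          rcases le_or_gt η₁ (ρ m) with hs1 | hs1
          · rcases le_or_gt η₂ (ρ m) with hs2 | hs2
            · exact le_trans (hσ1 m hs2).2 (le_mul_of_one_le_left (hσpos m).le (by linarith))
            · exact le_trans (hσ2 m hs1 hs2).2 (mul_le_mul_of_nonneg_right hγ₂₃ (hσpos m).le)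
          · exact (hσ3 m hs1).2
        calc σ (m + 1) ≤ γ₃ * σ m := hup
          _ ≤ γ₃ * (L / (1 - η₂)) :=
              mul_le_mul_of_nonneg_left hc.le (by linarith : (0:ℝ) ≤ γ₃)
          _ ≤ σmax := le_max_right _ _
  have hσmaxpos : 0 < σmax := lt_of_lt_of_le (hσpos 0) (hσub 0)
  clear_value σmax
  -- infinitely many successful iterations
  have hSinf : ∀ N, ∃ j, N ≤ j ∧ η₁ ≤ ρ j := by
    intro N
    by_contra hno
    push_neg at hno
    have hgrow : ∀ m : ℕ, γ₂ ^ m * σ N ≤ σ (N + m) := by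
      intro m
      induction m with
      | zero => simp
      | succ p ih =>
        have h1 := (hσ3 (N + p) (hno (N + p) (Nat.le_add_right N p))).1
        calc γ₂ ^ (p + 1) * σ N = γ₂ * (γ₂ ^ p * σ N) := by ring
          _ ≤ γ₂ * σ (N + p) := mul_le_mul_of_nonneg_left ih (by linarith)
          _ ≤ σ (N + p + 1) := h1
    obtain ⟨m, hm⟩ := pow_unbounded_of_one_lt (σmax / σ N) hγ₂
    rw [div_lt_iff₀ (hσpos N)] at hm
    exact absurd (hσub (N + m)) (not_le.2 (lt_of_lt_of_le hm (hgrow m)))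
  -- f (x k) converges, so successive decreases tend to 0
  have hanti : Antitone fun k => f (x k) := antitone_nat_of_succ_le hmono
  have hbdd : BddBelow (Set.range fun k => f (x k)) :=
    ⟨fmin, by rintro y ⟨k, rfl⟩; exact hfmin (x k) (hlev k)⟩
  have hconv : Filter.Tendsto (fun k => f (x k)) Filter.atTop (nhds (⨅ k, f (x k))) :=
    tendsto_atTop_ciInf hanti hbdd
  have hdiff0 : Filter.Tendsto (fun k => f (x k) - f (x (k + 1))) Filter.atTop (nhds 0) := by
    have h2 : Filter.Tendsto (fun k => f (x (k + 1))) Filter.atTop (nhds (⨅ k, f (x k))) :=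
      hconv.comp (Filter.tendsto_add_atTop_nat 1)
    simpa using hconv.sub h2
  -- final ε-N argument
  rw [Metric.tendsto_atTop]
  intro ε hε
  set ε' : ℝ := θ * ε with hε'def
  have hε'pos : 0 < ε' := mul_pos hθ0 hε
  set Mδ : ℝ := min (β * ε' ^ 2 / Hmax) (Real.sqrt (3 * β * ε' ^ 3 / σmax)) with hMδdef
  have hMδpos : 0 < Mδ :=
    lt_min (div_pos (mul_pos hβ0 (pow_pos hε'pos 2)) hHmax)
      (Real.sqrt_pos.2 (div_pos (mul_pos (mul_pos (by norm_num : (0:ℝ) < 3) hβ0)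
        (pow_pos hε'pos 3)) hσmaxpos))
  set δ : ℝ := η₁ * (1 - β) * Mδ with hδdef
  have hδpos : 0 < δ := mul_pos (mul_pos hη₁0 (by linarith)) hMδpos
  clear_value ε' Mδ δ
  obtain ⟨N, hN⟩ := Metric.tendsto_atTop.1 hdiff0 δ hδpos
  have hkey : ∀ k, N ≤ k → η₁ ≤ ρ k → ‖gradf (x k)‖ < ε := by
    intro k hk hsucc
    by_contra hge
    push_neg at hge
    have hgε : ε' ≤ ‖g k‖ := by
      rw [hε'def]
      exact le_trans (mul_le_mul_of_nonneg_left hge hθ0.le) (hgr k)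
    have hαlbk : min (β / Hmax) (Real.sqrt (3 * β / (σmax * ‖g k‖))) ≤ α k :=
      hαlb' k σmax (hσub k) hσmaxpos
    have hmin1 : min (β / Hmax) (Real.sqrt (3 * β / (σmax * ‖g k‖))) * ‖g k‖ ^ 2
        ≤ α k * ‖g k‖ ^ 2 := mul_le_mul_of_nonneg_right hαlbk (sq_nonneg _)
    have hcomp1 : β * ε' ^ 2 / Hmax ≤ β / Hmax * ‖g k‖ ^ 2 := by
      rw [show β / Hmax * ‖g k‖ ^ 2 = β * ‖g k‖ ^ 2 / Hmax by ring]
      have h1 : ε' ^ 2 ≤ ‖g k‖ ^ 2 := pow_le_pow_left₀ hε'pos.le hgε 2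
      have h2 : β * ε' ^ 2 ≤ β * ‖g k‖ ^ 2 := mul_le_mul_of_nonneg_left h1 hβ0.le
      exact (div_le_div_iff_of_pos_right hHmax).2 h2
    have hcomp2 : Real.sqrt (3 * β * ε' ^ 3 / σmax)
        ≤ Real.sqrt (3 * β / (σmax * ‖g k‖)) * ‖g k‖ ^ 2 := by
      rw [sqrt_mul_sq β σmax ‖g k‖ hβ0 hσmaxpos (hgn k)]
      apply Real.sqrt_le_sqrt
      have h1 : ε' ^ 3 ≤ ‖g k‖ ^ 3 := pow_le_pow_left₀ hε'pos.le hgε 3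
      have h2 : 3 * β * ε' ^ 3 ≤ 3 * β * ‖g k‖ ^ 3 := by nlinarith [hβ0.le]
      exact (div_le_div_iff_of_pos_right hσmaxpos).2 h2
    have hMδle : Mδ ≤ α k * ‖g k‖ ^ 2 := by
      refine le_trans ?_ hmin1
      rw [min_mul_of_nonneg _ _ (sq_nonneg ‖g k‖)]
      refine le_min (le_trans ?_ hcomp1) (le_trans ?_ hcomp2)
      · rw [hMδdef]; exact min_le_left _ _
      · rw [hMδdef]; exact min_le_right _ _
    have hdk : δ ≤ f (x k) - f (x (k + 1)) := by
      have h2 : α k * (1 - β) * ‖g k‖ ^ 2 ≤ D k := by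
        linarith [hDlb k, (hsn3 k).le]
      have h5 : δ ≤ η₁ * (α k * (1 - β) * ‖g k‖ ^ 2) := by
        rw [hδdef]
        calc η₁ * (1 - β) * Mδ ≤ η₁ * (1 - β) * (α k * ‖g k‖ ^ 2) :=
              mul_le_mul_of_nonneg_left hMδle (mul_nonneg hη₁0.le (by linarith))
          _ = η₁ * (α k * (1 - β) * ‖g k‖ ^ 2) := by ring
      have h4 : η₁ * (α k * (1 - β) * ‖g k‖ ^ 2) ≤ η₁ * D k :=
        mul_le_mul_of_nonneg_left h2 hη₁0.le
      linarith [hdec k hsucc]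
    have hcontra := hN k hk
    rw [Real.dist_eq, sub_zero] at hcontra
    have : f (x k) - f (x (k + 1)) < δ := lt_of_abs_lt hcontra
    linarith
  -- x is unchanged along unsuccessful iterations
  have hxeq : ∀ k j, k ≤ j → (∀ i, k ≤ i → i < j → ρ i < η₁) → x j = x k := by
    intro k j hkj hfail
    induction j with
    | zero => rw [Nat.le_zero.1 hkj]
    | succ m ih =>
      rcases Nat.lt_or_ge k (m + 1) with h | h
      · have hkm : k ≤ m := Nat.lt_succ_iff.1 h
        rw [hx m, if_neg (not_le.2 (hfail m hkm (Nat.lt_succ_self m)))]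
        exact ih hkm fun i hi hij => hfail i hi (Nat.lt_succ_of_lt hij)
      · rw [le_antisymm hkj h]
  refine ⟨N, fun k hk => ?_⟩
  have hQ : ∃ j, k ≤ j ∧ η₁ ≤ ρ j := hSinf k
  set j0 := Nat.find hQ with hj0def
  have hj0 := Nat.find_spec hQ
  have hxj : x j0 = x k := by
    apply hxeq k j0 hj0.1
    intro i hi hij
    by_contra hcon
    push_neg at hcon
    exact Nat.find_min hQ hij ⟨hi, hcon⟩
  rw [dist_zero_right, ← hxj]
  exact hkey j0 (le_trans hk hj0.1) hj0.2

end
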